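/- There exist probability distributions p, q on Z_4 for which R is strictly superadditive: with p = (13/64, 18/64, 19/64, 14/64) and q = (7/20, 3/20, 6/20, 4/20), one has max_n |(p*q)^_n| < (max_n |p̂_n|)·(max_n |q̂_n|), hence R(p*q) > R(p) + R(q). -/

import Mathlib

/-- The convolution of two distributions over `Z_4`. -/
noncomputable def convZ4 (p q : Fin 4 → ℝ) (k : Fin 4) : ℝ :=
  ∑ k₁ : Fin 4, ∑ k₂ : Fin 4,
    if (k₁.val + k₂.val) % 4 = k.val then p k₁ * q k₂ else 0

/-- The Fourier coefficient `p̂_n = ∑_{m=0}^{3} e^{2πi n m/4} p_m` on `Z_4`. -/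
noncomputable def dft4 (p : Fin 4 → ℝ) (n : ℕ) : ℂ :=
  ∑ m : Fin 4,
    Complex.exp (2 * Real.pi * Complex.I * (n : ℂ) * (m.val : ℂ) / (4 : ℂ)) * (p m : ℂ)

/-- `max_{n ∈ {1,2,3}} |p̂_n|` on `Z_4`. -/
noncomputable def rMax4 (p : Fin 4 → ℝ) : ℝ :=
  max (‖dft4 p 1‖) (max (‖dft4 p 2‖) (‖dft4 p 3‖))

/-- `R(p) = -2 log (max_{1≤n≤3} |p̂_n|)` on `Z_4`. -/
noncomputable def rateZ4 (p : Fin 4 → ℝ) : ℝ :=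
  -2 * Real.log (rMax4 p)

lemma exp_key (n m : ℕ) :
    Complex.exp (2 * Real.pi * Complex.I * (n : ℂ) * (m : ℂ) / (4 : ℂ)) = Complex.I ^ (n * m) := by
  have h1 : Complex.exp ((Real.pi / 2 : ℝ) * Complex.I) = Complex.I := by
    rw [Complex.exp_mul_I]
    push_cast
    rw [Complex.cos_pi_div_two, Complex.sin_pi_div_two]
    ring
  have h2 : (2 * Real.pi * Complex.I * (n : ℂ) * (m : ℂ) / (4 : ℂ))
      = ((n * m : ℕ) : ℂ) * ((Real.pi / 2 : ℝ) * Complex.I) := by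
    push_cast
    ring
  rw [h2, Complex.exp_nat_mul, h1]

lemma dft4_one (p : Fin 4 → ℝ) :
    dft4 p 1 = ((p 0 - p 2 : ℝ) : ℂ) + ((p 1 - p 3 : ℝ) : ℂ) * Complex.I := by
  simp only [dft4, Fin.sum_univ_four, exp_key]
  norm_num [pow_succ, Complex.I_mul_I, show ((3:Fin 4):ℕ) = 3 from rfl, show ((2:Fin 4):ℕ) = 2 from rfl, show ((1:Fin 4):ℕ) = 1 from rfl, show ((0:Fin 4):ℕ) = 0 from rfl]
  ring

lemma dft4_two (p : Fin 4 → ℝ) :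
    dft4 p 2 = ((p 0 - p 1 + p 2 - p 3 : ℝ) : ℂ) := by
  simp only [dft4, Fin.sum_univ_four, exp_key]
  norm_num [pow_succ, Complex.I_mul_I, show ((3:Fin 4):ℕ) = 3 from rfl, show ((2:Fin 4):ℕ) = 2 from rfl, show ((1:Fin 4):ℕ) = 1 from rfl, show ((0:Fin 4):ℕ) = 0 from rfl]
  ring

lemma dft4_three (p : Fin 4 → ℝ) :
    dft4 p 3 = ((p 0 - p 2 : ℝ) : ℂ) + ((p 3 - p 1 : ℝ) : ℂ) * Complex.I := by
  simp only [dft4, Fin.sum_univ_four, exp_key]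
  norm_num [pow_succ, Complex.I_mul_I, show ((3:Fin 4):ℕ) = 3 from rfl, show ((2:Fin 4):ℕ) = 2 from rfl, show ((1:Fin 4):ℕ) = 1 from rfl, show ((0:Fin 4):ℕ) = 0 from rfl]
  ring

lemma abs_mk (x y : ℝ) :
    ‖(x : ℂ) + (y : ℂ) * Complex.I‖ = Real.sqrt (x ^ 2 + y ^ 2) := by
  rw [Complex.norm_def, Complex.normSq_add_mul_I]

/-- For the explicit distributions `p = (13/64, 18/64, 19/64, 14/64)` and
`q = (7/20, 3/20, 6/20, 4/20)` on `Z_4`, one has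
`max_n |(p*q)^_n| < (max_n |p̂_n|) (max_n |q̂_n|)`, hence `R(p*q) > R(p) + R(q)`:
`R` is strictly superadditive. -/
theorem rateZ4_strictly_superadditive :
    let p : Fin 4 → ℝ := ![13/64, 18/64, 19/64, 14/64]
    let q : Fin 4 → ℝ := ![7/20, 3/20, 6/20, 4/20]
    rMax4 (convZ4 p q) < rMax4 p * rMax4 q ∧
    rateZ4 (convZ4 p q) > rateZ4 p + rateZ4 q := by
  intro p q
  have hc0 : convZ4 p q 0 = 319 / 1280 := by
    simp only [convZ4, Fin.sum_univ_four, p, q]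
    norm_num [Matrix.cons_val_two, Matrix.cons_val_three, show ((3:Fin 4):ℕ) = 3 from rfl, show ((2:Fin 4):ℕ) = 2 from rfl, show ((1:Fin 4):ℕ) = 1 from rfl, show ((0:Fin 4):ℕ) = 0 from rfl]
  have hc1 : convZ4 p q 1 = 325 / 1280 := by
    simp only [convZ4, Fin.sum_univ_four, p, q]
    norm_num [Matrix.cons_val_two, Matrix.cons_val_three, show ((3:Fin 4):ℕ) = 3 from rfl, show ((2:Fin 4):ℕ) = 2 from rfl, show ((1:Fin 4):ℕ) = 1 from rfl, show ((0:Fin 4):ℕ) = 0 from rfl]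
  have hc2 : convZ4 p q 2 = 321 / 1280 := by
    simp only [convZ4, Fin.sum_univ_four, p, q]
    norm_num [Matrix.cons_val_two, Matrix.cons_val_three, show ((3:Fin 4):ℕ) = 3 from rfl, show ((2:Fin 4):ℕ) = 2 from rfl, show ((1:Fin 4):ℕ) = 1 from rfl, show ((0:Fin 4):ℕ) = 0 from rfl]
  have hc3 : convZ4 p q 3 = 315 / 1280 := by
    simp only [convZ4, Fin.sum_univ_four, p, q]
    norm_num [Matrix.cons_val_two, Matrix.cons_val_three, show ((3:Fin 4):ℕ) = 3 from rfl, show ((2:Fin 4):ℕ) = 2 from rfl, show ((1:Fin 4):ℕ) = 1 from rfl, show ((0:Fin 4):ℕ) = 0 from rfl]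
  -- rMax p
  have hp1 : ‖dft4 p 1‖ = Real.sqrt (13 / 1024) := by
    rw [dft4_one, abs_mk]
    norm_num [p, Matrix.cons_val_two, Matrix.cons_val_three]
  have hp2 : ‖dft4 p 2‖ = 0 := by
    rw [dft4_two]
    norm_num [p, Matrix.cons_val_two, Matrix.cons_val_three]
  have hp3 : ‖dft4 p 3‖ = Real.sqrt (13 / 1024) := by
    rw [dft4_three, abs_mk]
    norm_num [p, Matrix.cons_val_two, Matrix.cons_val_three]
  have hrp : rMax4 p = Real.sqrt (13 / 1024) := by
    rw [rMax4, hp1, hp2, hp3]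
    rw [max_eq_right (Real.sqrt_nonneg _), max_self]
  -- rMax q
  have hq1 : ‖dft4 q 1‖ = Real.sqrt (1 / 200) := by
    rw [dft4_one, abs_mk]
    norm_num [q, Matrix.cons_val_two, Matrix.cons_val_three]
  have hq2 : ‖dft4 q 2‖ = 3 / 10 := by
    rw [dft4_two]
    norm_num [q, Matrix.cons_val_two, Matrix.cons_val_three]
  have hq3 : ‖dft4 q 3‖ = Real.sqrt (1 / 200) := by
    rw [dft4_three, abs_mk]
    norm_num [q, Matrix.cons_val_two, Matrix.cons_val_three]
  have hsq : Real.sqrt (1 / 200) ≤ 3 / 10 := by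
    rw [show (3:ℝ)/10 = Real.sqrt ((3/10)^2) by rw [Real.sqrt_sq]; norm_num]
    apply Real.sqrt_le_sqrt; norm_num
  have hrq : rMax4 q = 3 / 10 := by
    rw [rMax4, hq1, hq2, hq3]
    rw [max_eq_left hsq, max_eq_right hsq]
  -- rMax conv
  have hC1 : ‖dft4 (convZ4 p q) 1‖ = Real.sqrt (13 / 204800) := by
    rw [dft4_one, abs_mk, hc0, hc1, hc2, hc3]
    norm_num
  have hC2 : ‖dft4 (convZ4 p q) 2‖ = 0 := by
    rw [dft4_two, hc0, hc1, hc2, hc3]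
    norm_num
  have hC3 : ‖dft4 (convZ4 p q) 3‖ = Real.sqrt (13 / 204800) := by
    rw [dft4_three, abs_mk, hc0, hc1, hc2, hc3]
    norm_num
  have hrC : rMax4 (convZ4 p q) = Real.sqrt (13 / 204800) := by
    rw [rMax4, hC1, hC2, hC3]
    rw [max_eq_right (Real.sqrt_nonneg _), max_self]
  have key : rMax4 (convZ4 p q) < rMax4 p * rMax4 q := by
    rw [hrC, hrp, hrq]
    have : Real.sqrt (13/1024) * (3/10) = Real.sqrt (13/1024 * (3/10)^2) := by
      rw [Real.sqrt_mul (by norm_num), Real.sqrt_sq (by norm_num)]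
    rw [this]
    apply Real.sqrt_lt_sqrt <;> norm_num
  refine ⟨key, ?_⟩
  have hCpos : (0:ℝ) < rMax4 (convZ4 p q) := by
    rw [hrC]; positivity
  have hppos : (0:ℝ) < rMax4 p := by rw [hrp]; positivity
  have hqpos : (0:ℝ) < rMax4 q := by rw [hrq]; norm_num
  have hlog : Real.log (rMax4 (convZ4 p q)) < Real.log (rMax4 p * rMax4 q) :=
    Real.log_lt_log hCpos key
  rw [Real.log_mul hppos.ne' hqpos.ne'] at hlog
  simp only [rateZ4, gt_iff_lt]
  linarith
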